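/- Consider a greedy peeling process on an undirected graph G = (V,E): starting with S₁ = V, at each step t remove a vertex v_t of minimum degree in the subgraph induced by S_t, forming S_{t+1} = S_t \ {v_t}, until the set is empty. Then the maximum over t of d(S_t) = |E(S_t)|/|S_t| is at least d(G)/2, where d(G) is the maximum density over all nonempty subsets. -/

import Mathlib

open Finset

noncomputable def edgesIn {V : Type*} [Fintype V] [DecidableEq V]
    (G : SimpleGraph V) (S : Finset V) : ℕ :=
  letI := Classical.decRel G.Adj
  letI : DecidablePred (fun e : Sym2 V => ∀ v ∈ e, v ∈ S) := Classical.decPred _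
  (G.edgeFinset.filter fun e => ∀ v ∈ e, v ∈ S).card

noncomputable def density {V : Type*} [Fintype V] [DecidableEq V]
    (G : SimpleGraph V) (S : Finset V) : ℝ :=
  (edgesIn G S : ℝ) / S.card

noncomputable def maxDensity {V : Type*} [Fintype V] [DecidableEq V] [Nonempty V]
    (G : SimpleGraph V) : ℝ :=
  (Finset.univ.powerset.filter Finset.Nonempty).sup'
    ⟨{Classical.arbitrary V}, by simp⟩ (density G)

noncomputable def degIn {V : Type*} [DecidableEq V]
    (G : SimpleGraph V) (v : V) (S : Finset V) : ℕ :=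
  letI := Classical.decRel G.Adj
  ((S.erase v).filter (G.Adj v)).card

lemma degIn_mono {V : Type*} [DecidableEq V] (G : SimpleGraph V) (v : V)
    {S T : Finset V} (h : S ⊆ T) : degIn G v S ≤ degIn G v T := by
  classical
  unfold degIn
  convert Finset.card_le_card
    (Finset.filter_subset_filter _ (Finset.erase_subset_erase _ h)) using 2

lemma edgesIn_erase_aux {V : Type*} [Fintype V] [DecidableEq V] (G : SimpleGraph V)
    [DecidableRel G.Adj] {S : Finset V} {w : V} (hw : w ∈ S) :
    (G.edgeFinset.filter fun e => ∀ v ∈ e, v ∈ S).card =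
    (G.edgeFinset.filter fun e => ∀ v ∈ e, v ∈ S.erase w).card
      + ((S.erase w).filter (G.Adj w)).card := by
  classical
  rw [← Finset.card_filter_add_card_filter_not
    (p := fun e : Sym2 V => w ∈ e) (s := G.edgeFinset.filter fun e => ∀ v ∈ e, v ∈ S)]
  rw [add_comm]
  congr 1
  · rw [Finset.filter_filter]
    refine congrArg Finset.card ?_
    apply Finset.filter_congr
    intro e he
    constructor
    · rintro ⟨h1, h2⟩ x hx
      exact Finset.mem_erase.mpr ⟨fun hxw => h2 (hxw ▸ hx), h1 x hx⟩
    · intro h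
      refine ⟨fun x hx => Finset.mem_of_mem_erase (h x hx), fun hwe => ?_⟩
      exact (Finset.notMem_erase w S) (h w hwe)
  · rw [Finset.filter_filter, eq_comm]
    apply Finset.card_bij (fun u _ => s(w, u))
    · intro u hu
      simp only [Finset.mem_filter, Finset.mem_erase] at hu ⊢
      obtain ⟨⟨hne, huS⟩, hadj⟩ := hu
      refine ⟨SimpleGraph.mem_edgeFinset.mpr hadj, fun x hx => ?_, Sym2.mem_mk_left w u⟩
      rcases Sym2.mem_iff.mp hx with rfl | rfl
      · exact hw
      · exact huS
    · intro a ha b hb hab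
      exact Sym2.congr_right.mp hab
    · intro e he
      simp only [Finset.mem_filter] at he
      obtain ⟨hef, hes, hwe⟩ := he
      refine ⟨Sym2.Mem.other hwe, ?_, Sym2.other_spec hwe⟩
      have hspec := Sym2.other_spec hwe
      have hadj : G.Adj w (Sym2.Mem.other hwe) := by
        rw [← SimpleGraph.mem_edgeSet, hspec]
        exact SimpleGraph.mem_edgeFinset.mp hef
      simp only [Finset.mem_filter, Finset.mem_erase]
      exact ⟨⟨(G.ne_of_adj hadj).symm, hes _ (Sym2.other_mem hwe)⟩, hadj⟩

lemma edgesIn_erase {V : Type*} [Fintype V] [DecidableEq V] (G : SimpleGraph V)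
    {S : Finset V} {w : V} (hw : w ∈ S) :
    edgesIn G S = edgesIn G (S.erase w) + degIn G w S := by
  classical
  unfold edgesIn degIn
  convert edgesIn_erase_aux G hw using 2 <;> congr!

lemma sum_degIn {V : Type*} [Fintype V] [DecidableEq V] (G : SimpleGraph V)
    (S : Finset V) : ∑ u ∈ S, degIn G u S = 2 * edgesIn G S := by
  classical
  induction S using Finset.induction_on with
  | empty =>
    have : edgesIn G ∅ = 0 := by
      unfold edgesIn
      apply Finset.card_eq_zero.mpr
      apply Finset.eq_empty_iff_forall_notMem.mpr
      intro e he
      simp only [Finset.mem_filter] at he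
      obtain ⟨⟨x, y⟩, rfl⟩ := e.exists_rep
      exact absurd (he.2 x (Sym2.mem_mk_left x y)) (Finset.notMem_empty x)
    simp [this]
  | insert _ _ ha ih =>
    rename_i a s
    rw [Finset.sum_insert ha]
    have h1 : ∀ u ∈ s, degIn G u (insert a s) = degIn G u s + if G.Adj u a then 1 else 0 := by
      intro u hu
      unfold degIn
      have hau : a ≠ u := fun h => ha (h ▸ hu)
      rw [show (insert a s).erase u = insert a (s.erase u) from Finset.erase_insert_of_ne hau,
        Finset.filter_insert]
      have hans : a ∉ (s.erase u).filter (G.Adj u) := fun h =>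
        ha (Finset.mem_of_mem_erase (Finset.mem_of_mem_filter _ h))
      split
      · rw [Finset.card_insert_of_notMem hans]
      · simp
    rw [Finset.sum_congr rfl h1, Finset.sum_add_distrib, ih]
    rw [show (∑ x ∈ s, if G.Adj x a then 1 else 0) = (s.filter fun u => G.Adj u a).card by
      rw [← Finset.sum_filter, Finset.card_eq_sum_ones]]
    have h2 : (s.filter fun u => G.Adj u a).card = degIn G a (insert a s) := by
      unfold degIn
      rw [Finset.erase_insert ha]
      congr 1
      apply Finset.filter_congr
      intro u hu
      exact ⟨fun h => G.adj_symm h, fun h => G.adj_symm h⟩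
    have h3 : edgesIn G (insert a s) = edgesIn G s + degIn G a (insert a s) := by
      have := edgesIn_erase G (Finset.mem_insert_self a s)
      rwa [Finset.erase_insert ha] at this
    rw [h2, h3]
    ring

lemma density_le_maxDensity {V : Type*} [Fintype V] [DecidableEq V] [Nonempty V]
    (G : SimpleGraph V) {T : Finset V} (hT : T.Nonempty) :
    density G T ≤ maxDensity G := by
  apply Finset.le_sup'
  simp only [Finset.mem_filter, Finset.mem_powerset]
  exact ⟨Finset.subset_univ T, hT⟩

/-- Every vertex of a densest set has induced degree at least the max density. -/
lemma maxDensity_le_degIn {V : Type*} [Fintype V] [DecidableEq V] [Nonempty V]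
    (G : SimpleGraph V) {T : Finset V} (hT : T.Nonempty)
    (hTd : density G T = maxDensity G) :
    ∀ w ∈ T, maxDensity G ≤ (degIn G w T : ℝ) := by
  classical
  intro w hw
  set d : ℝ := maxDensity G with hd
  have hc : (0:ℕ) < T.card := Finset.card_pos.mpr hT
  have hEd : (edgesIn G T : ℝ) = d * T.card := by
    have := hTd
    unfold density at this
    field_simp at this
    linarith [this]
  by_cases he : (T.erase w).Nonempty
  · have hle : density G (T.erase w) ≤ d := density_le_maxDensity G he
    have hcard : (T.erase w).card = T.card - 1 := Finset.card_erase_of_mem hw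
    have hc1 : 1 ≤ T.card := hc
    have hE' : (edgesIn G (T.erase w) : ℝ) = (edgesIn G T : ℝ) - degIn G w T := by
      have := edgesIn_erase G hw
      push_cast [this]
      ring
    have hcpos' : (0:ℝ) < ((T.erase w).card : ℝ) := by
      exact_mod_cast Finset.card_pos.mpr he
    have hcard' : ((T.erase w).card : ℝ) = (T.card : ℝ) - 1 := by
      rw [hcard]
      push_cast [Nat.cast_sub hc1]
      ring
    unfold density at hle
    rw [div_le_iff₀ hcpos'] at hle
    rw [hE', hcard'] at hle
    nlinarith [hle, hEd]
  · have hTw : T = {w} := by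
      rw [Finset.not_nonempty_iff_eq_empty] at he
      apply Finset.eq_singleton_iff_unique_mem.mpr
      refine ⟨hw, fun x hx => ?_⟩
      by_contra hne
      exact (Finset.eq_empty_iff_forall_notMem.mp he x) (Finset.mem_erase.mpr ⟨hne, hx⟩)
    have hE0 : edgesIn G T = 0 := by
      unfold edgesIn
      apply Finset.card_eq_zero.mpr
      apply Finset.eq_empty_iff_forall_notMem.mpr
      intro e hee
      simp only [Finset.mem_filter] at hee
      obtain ⟨⟨x, y⟩, rfl⟩ := e.exists_rep
      have hx := hee.2 x (Sym2.mem_mk_left x y)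
      have hy := hee.2 y (Sym2.mem_mk_right x y)
      rw [hTw, Finset.mem_singleton] at hx hy
      have : ¬ s(x,y).IsDiag := by
        have := SimpleGraph.mem_edgeFinset.mp hee.1
        exact G.not_isDiag_of_mem_edgeSet this
      exact this (by rw [hx, hy]; exact Sym2.isDiag_iff_proj_eq |>.mpr rfl)
    have : d = 0 := by
      rw [← hTd]
      unfold density
      rw [hE0]
      simp
    rw [this]
    positivity

/-- Greedy peeling: starting from `S 0 = univ` and repeatedly removing a vertex of
minimum induced degree, some intermediate set has density at least `d(G)/2`. -/
theorem greedy_peeling_two_approx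
    {V : Type*} [Fintype V] [DecidableEq V] [Nonempty V]
    (G : SimpleGraph V)
    (S : ℕ → Finset V) (v : ℕ → V)
    (hinit : S 0 = Finset.univ)
    (hmem : ∀ t < Fintype.card V, v t ∈ S t)
    (hmin : ∀ t < Fintype.card V, ∀ u ∈ S t, degIn G (v t) (S t) ≤ degIn G u (S t))
    (hstep : ∀ t < Fintype.card V, S (t + 1) = (S t).erase (v t)) :
    ∃ t < Fintype.card V, maxDensity G / 2 ≤ density G (S t) := by
  classical
  set n := Fintype.card V with hn
  -- obtain a densest set
  have hwit : ((Finset.univ.powerset.filter Finset.Nonempty : Finset (Finset V))).Nonempty :=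
    ⟨{Classical.arbitrary V}, by simp⟩
  obtain ⟨T, hTmem, hTd⟩ := Finset.exists_mem_eq_sup' hwit (density G)
  simp only [Finset.mem_filter, Finset.mem_powerset] at hTmem
  have hTne : T.Nonempty := hTmem.2
  have hTdens : density G T = maxDensity G := hTd.symm
  -- cardinalities along the peeling
  have hcard : ∀ t ≤ n, (S t).card = n - t := by
    intro t
    induction t with
    | zero => intro _; rw [hinit, Finset.card_univ]; omega
    | succ t ih =>
      intro ht
      have htn : t < n := Nat.lt_of_succ_le ht
      rw [hstep t htn, Finset.card_erase_of_mem (hmem t htn), ih (le_of_lt htn)]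
      omega
  have hSn : S n = ∅ := Finset.card_eq_zero.mp (by rw [hcard n le_rfl]; omega)
  -- find the last time T is contained in S t
  have hex : ∃ m, ¬ T ⊆ S m := ⟨n, fun h => by
    obtain ⟨x, hx⟩ := hTne
    exact absurd (h hx) (by rw [hSn]; exact Finset.notMem_empty x)⟩
  set t₀ := Nat.find hex with ht₀
  have ht₀n : t₀ ≤ n := Nat.find_le (by
    obtain ⟨x, hx⟩ := hTne
    intro h
    exact absurd (h hx) (by rw [hSn]; exact Finset.notMem_empty x))
  have ht₀pos : 0 < t₀ := by
    rcases Nat.eq_zero_or_pos t₀ with h0 | h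
    · exfalso
      have := Nat.find_spec hex
      rw [← ht₀, h0, hinit] at this
      exact this (Finset.subset_univ T)
    · exact h
  set t := t₀ - 1 with htdef
  have htn : t < n := lt_of_lt_of_le (Nat.sub_lt ht₀pos one_pos) ht₀n
  have hsub : T ⊆ S t := by
    by_contra h
    have : t₀ ≤ t := Nat.find_le h
    omega
  have hnsub : ¬ T ⊆ S (t + 1) := by
    have : t + 1 = t₀ := by omega
    rw [this]
    exact Nat.find_spec hex
  have hvt : v t ∈ T := by
    rw [hstep t htn] at hnsub
    obtain ⟨x, hxT, hx⟩ := Finset.not_subset.mp hnsub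
    have hxS : x ∈ S t := hsub hxT
    have : x = v t := by
      by_contra hne
      exact hx (Finset.mem_erase.mpr ⟨hne, hxS⟩)
    exact this ▸ hxT
  refine ⟨t, htn, ?_⟩
  -- every vertex of S t has degree at least maxDensity
  set d : ℝ := maxDensity G with hd
  have hkey : ∀ u ∈ S t, d ≤ (degIn G u (S t) : ℝ) := by
    intro u hu
    calc d ≤ (degIn G (v t) T : ℝ) := maxDensity_le_degIn G hTne hTdens (v t) hvt
    _ ≤ (degIn G (v t) (S t) : ℝ) := by exact_mod_cast degIn_mono G (v t) hsub
    _ ≤ (degIn G u (S t) : ℝ) := by exact_mod_cast hmin t htn u hu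
  have hStne : (S t).Nonempty := ⟨v t, hmem t htn⟩
  have hcpos : (0:ℝ) < ((S t).card : ℝ) := by exact_mod_cast Finset.card_pos.mpr hStne
  have hsum : ((S t).card : ℝ) * d ≤ 2 * (edgesIn G (S t) : ℝ) := by
    have h1 : ((S t).card : ℝ) * d ≤ ∑ u ∈ S t, (degIn G u (S t) : ℝ) := by
      rw [Finset.card_eq_sum_ones, Nat.cast_sum]
      push_cast
      rw [Finset.sum_mul]
      apply Finset.sum_le_sum
      intro u hu
      rw [one_mul]
      exact hkey u hu
    have h2 : ∑ u ∈ S t, (degIn G u (S t) : ℝ) = 2 * (edgesIn G (S t) : ℝ) := by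
      rw [← Nat.cast_sum, sum_degIn]
      push_cast
      ring
    linarith
  unfold density
  rw [div_le_div_iff₀ (by norm_num) hcpos]
  linarith
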